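/- Let a ≥ 1 be a real number, let n, t be integers with 0 ≤ t < n, let f: {0,1}^n → ℝ be an a-self-bounding function, and let x₀ ∈ {0,1}^n be any point. Then (n − t − a) · Σ_{x : d(x,x₀)=t} f(x) ≤ (t+1) · Σ_{x : d(x,x₀)=t+1} f(x), where d(·,·) denotes Hamming distance and the sums range over all points of {0,1}^n at the indicated Hamming distance from x₀. -/
import Mathlib


noncomputable section

/-- A function `f : {0,1}^n → ℝ` is `a`-self-bounding. -/
def SelfBounding (n : ℕ) (a : ℝ) (f : (Fin n → Bool) → ℝ) : Prop :=
  ∀ x : Fin n → Bool,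
    (∀ i : Fin n,
      f x - min (f (Function.update x i false)) (f (Function.update x i true)) ≤ 1) ∧
    ∑ i : Fin n,
      (f x - min (f (Function.update x i false)) (f (Function.update x i true))) ≤ a * f x

section aux

variable {n : ℕ}

/-- flip coordinate i -/
def flp (x : Fin n → Bool) (i : Fin n) : Fin n → Bool := Function.update x i (!x i)

lemma flp_flp (x : Fin n → Bool) (i : Fin n) : flp (flp x i) i = x := by
  unfold flp
  simp [Function.update_idem]

lemma flp_self (x : Fin n → Bool) (i : Fin n) : flp x i i = !x i := by
  simp [flp]

lemma flp_eq_of_ne (x : Fin n → Bool) {i j : Fin n} (h : j ≠ i) : flp x i j = x j := by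
  simp [flp, Function.update_of_ne h]

lemma min_le_self' (f : (Fin n → Bool) → ℝ) (x : Fin n → Bool) (i : Fin n) :
    min (f (Function.update x i false)) (f (Function.update x i true)) ≤ f x := by
  cases h : x i
  · calc min _ _ ≤ f (Function.update x i false) := min_le_left _ _
      _ = f x := by rw [← h, Function.update_eq_self]
  · calc min _ _ ≤ f (Function.update x i true) := min_le_right _ _
      _ = f x := by rw [← h, Function.update_eq_self]

lemma min_le_flp (f : (Fin n → Bool) → ℝ) (x : Fin n → Bool) (i : Fin n) :
    min (f (Function.update x i false)) (f (Function.update x i true)) ≤ f (flp x i) := by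
  cases h : x i
  · simpa [flp, h] using min_le_right (f (Function.update x i false)) (f (Function.update x i true))
  · simpa [flp, h] using min_le_left (f (Function.update x i false)) (f (Function.update x i true))

lemma dist_flp (x x₀ : Fin n → Bool) {i : Fin n} (h : x i = x₀ i) :
    hammingDist (flp x i) x₀ = hammingDist x x₀ + 1 := by
  unfold hammingDist
  have hset : (Finset.univ.filter (fun j => flp x i j ≠ x₀ j))
      = insert i (Finset.univ.filter (fun j => x j ≠ x₀ j)) := by
    ext j
    by_cases hj : j = i
    · subst hj
      simp [flp_self, h]
    · simp [hj, flp_eq_of_ne x hj]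
  show (Finset.univ.filter (fun j => flp x i j ≠ x₀ j)).card
      = (Finset.univ.filter (fun j => x j ≠ x₀ j)).card + 1
  rw [hset, Finset.card_insert_of_notMem (by simp [h])]

end aux

open Finset in
theorem level_sum_bound (n t : ℕ) (a : ℝ) (ha : 1 ≤ a) (ht : t < n)
    (f : (Fin n → Bool) → ℝ) (hf : SelfBounding n a f) (x₀ : Fin n → Bool) :
    ((n : ℝ) - (t : ℝ) - a) *
        ∑ x ∈ Finset.univ.filter (fun x : Fin n → Bool => hammingDist x x₀ = t), f x ≤
      ((t : ℝ) + 1) *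
        ∑ x ∈ Finset.univ.filter (fun x : Fin n → Bool => hammingDist x x₀ = t + 1), f x := by
  classical
  set St := Finset.univ.filter (fun x : Fin n → Bool => hammingDist x x₀ = t) with hSt
  set St1 := Finset.univ.filter (fun x : Fin n → Bool => hammingDist x x₀ = t + 1) with hSt1
  have key : ∀ x ∈ St, ((n : ℝ) - t - a) * f x ≤
      ∑ i ∈ Finset.univ.filter (fun i : Fin n => x i = x₀ i), f (flp x i) := by
    intro x hx
    have hxd : hammingDist x x₀ = t := by simpa [hSt] using hx
    have hA : (Finset.univ.filter (fun i : Fin n => x i = x₀ i)).card = n - t := by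
      have h2 := Finset.card_filter_add_card_filter_not
        (s := (Finset.univ : Finset (Fin n))) (p := fun i : Fin n => x i = x₀ i)
      have hd : (Finset.univ.filter (fun i : Fin n => ¬ x i = x₀ i)).card = t := by
        simpa [hammingDist] using hxd
      have hcard : (Finset.univ : Finset (Fin n)).card = n := by simp
      omega
    have h1 : ∑ i ∈ Finset.univ.filter (fun i : Fin n => x i = x₀ i),
        (f x - f (flp x i)) ≤ a * f x := by
      calc ∑ i ∈ Finset.univ.filter (fun i : Fin n => x i = x₀ i), (f x - f (flp x i))
          ≤ ∑ i ∈ Finset.univ.filter (fun i : Fin n => x i = x₀ i),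
            (f x - min (f (Function.update x i false)) (f (Function.update x i true))) := by
            apply Finset.sum_le_sum
            intro i _
            have := min_le_flp f x i
            linarith
        _ ≤ ∑ i : Fin n,
            (f x - min (f (Function.update x i false)) (f (Function.update x i true))) := by
            apply Finset.sum_le_sum_of_subset_of_nonneg (Finset.filter_subset _ _)
            intro i _ _
            have := min_le_self' f x i
            linarith
        _ ≤ a * f x := (hf x).2
    rw [Finset.sum_sub_distrib, Finset.sum_const, hA] at h1
    have hnt : ((n - t : ℕ) : ℝ) = (n : ℝ) - t := by
      push_cast [Nat.cast_sub ht.le]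
      ring
    rw [nsmul_eq_mul, hnt] at h1
    linarith
  -- double counting
  have dc : ∑ x ∈ St, ∑ i ∈ Finset.univ.filter (fun i : Fin n => x i = x₀ i), f (flp x i)
      = ∑ y ∈ St1, ((t : ℝ) + 1) * f y := by
    rw [Finset.sum_sigma' St (fun x => Finset.univ.filter (fun i : Fin n => x i = x₀ i))
      (fun x i => f (flp x i))]
    have step : (∑ p ∈ St.sigma (fun x => Finset.univ.filter (fun i : Fin n => x i = x₀ i)),
          f (flp p.1 p.2))
        = ∑ q ∈ St1.sigma (fun y => Finset.univ.filter (fun i : Fin n => ¬ y i = x₀ i)),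
          f q.1 := by
      apply Finset.sum_bij' (i := fun p _ => (⟨flp p.1 p.2, p.2⟩ : Σ _ : Fin n → Bool, Fin n))
        (j := fun q _ => (⟨flp q.1 q.2, q.2⟩ : Σ _ : Fin n → Bool, Fin n))
      · intro p hp
        rw [Finset.mem_sigma] at hp ⊢
        obtain ⟨hp1, hp2⟩ := hp
        have hx : p.1 p.2 = x₀ p.2 := by simpa using hp2
        have hd : hammingDist p.1 x₀ = t := by simpa [hSt] using hp1
        constructor
        · simp only [hSt1, Finset.mem_filter, Finset.mem_univ, true_and]
          rw [dist_flp _ _ hx, hd]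
        · simp only [Finset.mem_filter, Finset.mem_univ, true_and]
          rw [flp_self, hx]
          cases x₀ p.2 <;> simp
      · intro q hq
        rw [Finset.mem_sigma] at hq ⊢
        obtain ⟨hq1, hq2⟩ := hq
        have hy : ¬ q.1 q.2 = x₀ q.2 := by simpa using hq2
        have hd : hammingDist q.1 x₀ = t + 1 := by simpa [hSt1] using hq1
        have hflpeq : flp q.1 q.2 q.2 = x₀ q.2 := by
          rw [flp_self]
          revert hy; cases q.1 q.2 <;> cases x₀ q.2 <;> simp
        constructor
        · simp only [hSt, Finset.mem_filter, Finset.mem_univ, true_and]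
          have := dist_flp (flp q.1 q.2) x₀ (i := q.2) hflpeq
          rw [flp_flp, hd] at this
          omega
        · simp only [Finset.mem_filter, Finset.mem_univ, true_and]
          exact hflpeq
      · intro p _
        exact Sigma.ext (flp_flp p.1 p.2) (by simp)
      · intro q _
        exact Sigma.ext (flp_flp q.1 q.2) (by simp)
      · intro p _
        rfl
    rw [step, Finset.sum_sigma St1 (fun y => Finset.univ.filter (fun i : Fin n => ¬ y i = x₀ i))
      (fun q => f q.1)]
    apply Finset.sum_congr rfl
    intro y hy
    have hd : hammingDist y x₀ = t + 1 := by simpa [hSt1] using hy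
    have hcard : (Finset.univ.filter (fun i : Fin n => ¬ y i = x₀ i)).card = t + 1 := by
      simpa [hammingDist] using hd
    show ∑ _s ∈ Finset.univ.filter (fun i : Fin n => ¬ y i = x₀ i), f y = (↑t + 1) * f y
    rw [Finset.sum_const, hcard, nsmul_eq_mul]
    push_cast
    ring
  have lhs_le : ((n : ℝ) - t - a) * ∑ x ∈ St, f x ≤ ∑ y ∈ St1, ((t:ℝ)+1) * f y := by
    rw [Finset.mul_sum, ← dc]
    exact Finset.sum_le_sum key
  calc ((n:ℝ) - t - a) * ∑ x ∈ St, f x ≤ ∑ y ∈ St1, ((t:ℝ)+1) * f y := lhs_le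
    _ = ((t:ℝ)+1) * ∑ x ∈ St1, f x := (Finset.mul_sum _ _ _).symm
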